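/- For any two elements α, β of T_{(1,1)}, the sum α + β is not an element of the generalized root system Φ of e_8^{(n)}; consequently the subspace spanned by the corresponding generators is an abelian subalgebra. -/
import Mathlib


open Finset

/-- `kk N i` is the `i`-th vector (1-based) of the standard orthonormal basis of `ℝ^N`. -/
def kk (N i : ℕ) : Fin N → ℝ := fun j => if (j : ℕ) + 1 = i then 1 else 0

/-- The "bosonic" generalized roots `Φ_O = {±k_i ± k_j : 1 ≤ i < j ≤ N}`. -/
def PhiO (N : ℕ) : Set (Fin N → ℝ) :=
  {x | ∃ i j : ℕ, 1 ≤ i ∧ i < j ∧ j ≤ N ∧ ∃ s t : ℤ,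
      (s = 1 ∨ s = -1) ∧ (t = 1 ∨ t = -1) ∧ x = (s : ℝ) • kk N i + (t : ℝ) • kk N j}

/-- The "spinorial" generalized roots `Φ_S = {(1/2)(±k_1 ± ... ± k_N)}` with an even number of
`+` signs. -/
def PhiS (N : ℕ) : Set (Fin N → ℝ) :=
  {x | ∃ e : ℕ → ℤ, (∀ i, e i = 1 ∨ e i = -1) ∧
      Even (((Finset.Icc 1 N).filter (fun i => e i = 1)).card) ∧
      x = (1/2 : ℝ) • ∑ i ∈ Finset.Icc 1 N, (e i : ℝ) • kk N i}

/-- The set `T_{(1,1)}` of generalized roots on a tip of the Magic Star. -/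
def T11 (N : ℕ) : Set (Fin N → ℝ) :=
  {x | x = -(kk N 2) - kk N 3} ∪
  {x | ∃ i : ℕ, 4 ≤ i ∧ i ≤ N ∧ (x = kk N 1 + kk N i ∨ x = kk N 1 - kk N i)} ∪
  {x | ∃ e : ℕ → ℤ, (∀ i, e i = 1 ∨ e i = -1) ∧
      Even (((Finset.Icc 4 N).filter (fun i => e i = 1)).card) ∧
      x = (1/2 : ℝ) • (kk N 1 - kk N 2 - kk N 3 + ∑ i ∈ Finset.Icc 4 N, (e i : ℝ) • kk N i)}

lemma sum_kk_apply (N a b : ℕ) (c : ℕ → ℝ) (j : Fin N) :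
    (∑ i ∈ Finset.Icc a b, c i • kk N i) j
      = if (j : ℕ) + 1 ∈ Finset.Icc a b then c ((j : ℕ) + 1) else 0 := by
  rw [Finset.sum_apply]
  simp only [Pi.smul_apply, kk, smul_eq_mul, mul_ite, mul_one, mul_zero]
  exact Finset.sum_ite_eq (Finset.Icc a b) ((j : ℕ) + 1) c

lemma phiS_coord {N : ℕ} {x : Fin N → ℝ} (hx : x ∈ PhiS N) (j : Fin N) :
    x j = 1/2 ∨ x j = -(1/2) := by
  obtain ⟨e, he, -, hx⟩ := hx
  have hj : (j : ℕ) + 1 ∈ Finset.Icc 1 N := by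
    simp only [Finset.mem_Icc]
    exact ⟨by omega, j.isLt⟩
  have : x j = (1/2 : ℝ) * ((e ((j : ℕ) + 1) : ℝ)) := by
    rw [hx, Pi.smul_apply, sum_kk_apply, if_pos hj, smul_eq_mul]
  rcases he ((j : ℕ) + 1) with h | h <;> rw [this, h] <;> try norm_num

lemma phiO_coord {N : ℕ} {x : Fin N → ℝ} (hx : x ∈ PhiO N) (j : Fin N) :
    x j = 0 ∨ x j = 1 ∨ x j = -1 := by
  obtain ⟨i, j', h1, hij, hj', s, t, hs, ht, hx⟩ := hx
  rw [hx]
  simp only [Pi.add_apply, Pi.smul_apply, kk, smul_eq_mul, mul_ite, mul_one, mul_zero]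
  split_ifs with ha hb hb
  · omega
  · rcases hs with h | h <;> rw [h] <;> norm_num
  · rcases ht with h | h <;> rw [h] <;> norm_num
  · norm_num

lemma phiO_support {N : ℕ} {x : Fin N → ℝ} (hx : x ∈ PhiO N) {j : Fin N}
    (h : x j ≠ 0) : ∃ i j' : ℕ, i < j' ∧ (∀ m : Fin N, x m ≠ 0 → (m : ℕ) + 1 = i ∨ (m : ℕ) + 1 = j') := by
  obtain ⟨i, j', h1, hij, hj', s, t, hs, ht, hx⟩ := hx
  refine ⟨i, j', hij, fun m hm => ?_⟩
  by_contra hc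
  push_neg at hc
  apply hm
  rw [hx]
  simp only [Pi.add_apply, Pi.smul_apply, kk, smul_eq_mul, mul_ite, mul_one, mul_zero,
    if_neg hc.1, if_neg hc.2, add_zero]

lemma phiO_not3 {N : ℕ} {x : Fin N → ℝ} (hx : x ∈ PhiO N) {a b c : Fin N}
    (hab : (a : ℕ) ≠ b) (hac : (a : ℕ) ≠ c) (hbc : (b : ℕ) ≠ c)
    (ha : x a ≠ 0) (hb : x b ≠ 0) (hc : x c ≠ 0) : False := by
  obtain ⟨i, j', hij, hsup⟩ := phiO_support hx ha
  have da := hsup a ha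
  have db := hsup b hb
  have dc := hsup c hc
  omega

lemma not_mem_of_bad {N : ℕ} {x : Fin N → ℝ} (j : Fin N)
    (h0 : x j ≠ 0) (h1 : x j ≠ 1) (h2 : x j ≠ -1) (h3 : x j ≠ 1/2) (h4 : x j ≠ -(1/2)) :
    x ∉ PhiO N ∪ PhiS N := by
  rintro (h | h)
  · rcases phiO_coord h j with h' | h' | h' <;> [exact h0 h'; exact h1 h'; exact h2 h']
  · rcases phiS_coord h j with h' | h' <;> [exact h3 h'; exact h4 h']

lemma not_mem_of_three {N : ℕ} (g0 : 0 < N) (g1 : 1 < N) (g2 : 2 < N) {x : Fin N → ℝ}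
    (c0 : x ⟨0, g0⟩ = 1) (c1 : x ⟨1, g1⟩ = -1) (c2 : x ⟨2, g2⟩ = -1) :
    x ∉ PhiO N ∪ PhiS N := by
  rintro (h | h)
  · exact phiO_not3 h (a := ⟨0, g0⟩) (b := ⟨1, g1⟩) (c := ⟨2, g2⟩)
      (by simp) (by simp) (by simp)
      (by rw [c0]; norm_num) (by rw [c1]; norm_num) (by rw [c2]; norm_num)
  · rcases phiS_coord h ⟨0, g0⟩ with h' | h' <;> rw [c0] at h' <;> norm_num at h'

lemma t11_coords {N : ℕ} (g0 : 0 < N) (g1 : 1 < N) (g2 : 2 < N) {α : Fin N → ℝ}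
    (hα : α ∈ T11 N) :
    (α ⟨0, g0⟩ = 0 ∧ α ⟨1, g1⟩ = -1 ∧ α ⟨2, g2⟩ = -1) ∨
    (α ⟨0, g0⟩ = 1 ∧ α ⟨1, g1⟩ = 0 ∧ α ⟨2, g2⟩ = 0) ∨
    (α ⟨0, g0⟩ = 1/2 ∧ α ⟨1, g1⟩ = -(1/2) ∧ α ⟨2, g2⟩ = -(1/2)) := by
  rcases hα with (hA | hB) | hC
  · left
    rw [Set.mem_setOf_eq] at hA
    subst hA
    refine ⟨?_, ?_, ?_⟩ <;> simp [kk]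
  · right; left
    obtain ⟨i, hi4, hiN, hB | hB⟩ := hB <;> subst hB <;>
      refine ⟨?_, ?_, ?_⟩ <;> simp [kk] <;> omega
  · right; right
    obtain ⟨e, he, -, hC⟩ := hC
    subst hC
    refine ⟨?_, ?_, ?_⟩ <;>
    · simp only [Pi.smul_apply, Pi.add_apply, Pi.sub_apply, smul_eq_mul]
      rw [sum_kk_apply]
      simp [kk]

/-- For any two elements `α, β ∈ T_{(1,1)}`, the sum `α + β` is not a generalized root of
`e_8^{(n)}`. -/
theorem T11_sum_not_root (n : ℕ) (hn : 1 ≤ n) (N : ℕ) (hN : N = 4 * (n + 1))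
    (α β : Fin N → ℝ) (hα : α ∈ T11 N) (hβ : β ∈ T11 N) :
    α + β ∉ PhiO N ∪ PhiS N := by
  have g0 : 0 < N := by omega
  have g1 : 1 < N := by omega
  have g2 : 2 < N := by omega
  rcases t11_coords g0 g1 g2 hα with ⟨a0, a1, a2⟩ | ⟨a0, a1, a2⟩ | ⟨a0, a1, a2⟩ <;>
  rcases t11_coords g0 g1 g2 hβ with ⟨b0, b1, b2⟩ | ⟨b0, b1, b2⟩ | ⟨b0, b1, b2⟩
  · -- A + A : coord1 = -2
    exact not_mem_of_bad ⟨1, g1⟩ (by norm_num [a1, b1]) (by norm_num [a1, b1]) (by norm_num [a1, b1])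
      (by norm_num [a1, b1]) (by norm_num [a1, b1])
  · -- A + B : (1, -1, -1)
    exact not_mem_of_three g0 g1 g2 (by norm_num [a0, b0]) (by norm_num [a1, b1]) (by norm_num [a2, b2])
  · -- A + C : coord1 = -3/2
    exact not_mem_of_bad ⟨1, g1⟩ (by norm_num [a1, b1]) (by norm_num [a1, b1])
      (by norm_num [a1, b1]) (by norm_num [a1, b1]) (by norm_num [a1, b1])
  · -- B + A
    exact not_mem_of_three g0 g1 g2 (by norm_num [a0, b0]) (by norm_num [a1, b1]) (by norm_num [a2, b2])
  · -- B + B : coord0 = 2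
    exact not_mem_of_bad ⟨0, g0⟩ (by norm_num [a0, b0]) (by norm_num [a0, b0]) (by norm_num [a0, b0])
      (by norm_num [a0, b0]) (by norm_num [a0, b0])
  · -- B + C : coord0 = 3/2
    exact not_mem_of_bad ⟨0, g0⟩ (by norm_num [a0, b0]) (by norm_num [a0, b0])
      (by norm_num [a0, b0]) (by norm_num [a0, b0]) (by norm_num [a0, b0])
  · -- C + A
    exact not_mem_of_bad ⟨1, g1⟩ (by norm_num [a1, b1]) (by norm_num [a1, b1])
      (by norm_num [a1, b1]) (by norm_num [a1, b1]) (by norm_num [a1, b1])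
  · -- C + B
    exact not_mem_of_bad ⟨0, g0⟩ (by norm_num [a0, b0]) (by norm_num [a0, b0])
      (by norm_num [a0, b0]) (by norm_num [a0, b0]) (by norm_num [a0, b0])
  · -- C + C : (1, -1, -1)
    exact not_mem_of_three g0 g1 g2 (by norm_num [a0, b0]) (by norm_num [a1, b1])
      (by norm_num [a2, b2])
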